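/- If ‖I_d − UᵀΠ₁ᵀΠ₁U‖₂ ≤ ε with 0 < ε ≤ 1/2 and Π₁U has rank d, then for the vectors û_i = e_iᵀA(Π₁A)⁺ one has |⟨U_{(i)}, U_{(j)}⟩ − ⟨û_i, û_j⟩| ≤ (ε/(1−ε)) ‖U_{(i)}‖₂ ‖U_{(j)}‖₂ for all i, j. -/

import Mathlib

open Matrix

open scoped Matrix.Norms.L2Operator

def IsMoorePenrose {m n : ℕ} (A : Matrix (Fin m) (Fin n) ℝ) (Ap : Matrix (Fin n) (Fin m) ℝ) : Prop :=
  A * Ap * A = A ∧ Ap * A * Ap = Ap ∧ (A * Ap)ᵀ = A * Ap ∧ (Ap * A)ᵀ = Ap * A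

private lemma mp_unique {m n : ℕ} {C : Matrix (Fin m) (Fin n) ℝ} {X Y : Matrix (Fin n) (Fin m) ℝ}
    (hX : IsMoorePenrose C X) (hY : IsMoorePenrose C Y) : X = Y := by
  obtain ⟨hX1, hX2, hX3, hX4⟩ := hX
  obtain ⟨hY1, hY2, hY3, hY4⟩ := hY
  have e1 : (C * X) * (C * Y) = C * X := by
    calc (C * X) * (C * Y) = (C * X)ᵀ * (C * Y)ᵀ := by rw [hX3, hY3]
      _ = Xᵀ * Cᵀ * (Yᵀ * Cᵀ) := by rw [transpose_mul C X, transpose_mul C Y]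
      _ = Xᵀ * (C * Y * C)ᵀ := by simp only [transpose_mul, Matrix.mul_assoc]
      _ = Xᵀ * Cᵀ := by rw [hY1]
      _ = (C * X)ᵀ := (transpose_mul C X).symm
      _ = C * X := hX3
  have e2 : (C * X) * (C * Y) = C * Y := by
    calc (C * X) * (C * Y) = (C * X * C) * Y := (Matrix.mul_assoc (C * X) C Y).symm
      _ = C * Y := by rw [hX1]
  have hCX : C * X = C * Y := e1.symm.trans e2
  have f1 : (X * C) * (Y * C) = X * C := by
    calc (X * C) * (Y * C) = X * (C * (Y * C)) := Matrix.mul_assoc X C (Y * C)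
      _ = X * (C * Y * C) := by rw [Matrix.mul_assoc C Y C]
      _ = X * C := by rw [hY1]
  have f2 : (X * C) * (Y * C) = Y * C := by
    calc (X * C) * (Y * C) = (X * C)ᵀ * (Y * C)ᵀ := by rw [hX4, hY4]
      _ = ((Y * C) * (X * C))ᵀ := (transpose_mul (Y * C) (X * C)).symm
      _ = (Y * (C * (X * C)))ᵀ := by rw [Matrix.mul_assoc Y C (X * C)]
      _ = (Y * (C * X * C))ᵀ := by rw [Matrix.mul_assoc C X C]
      _ = (Y * C)ᵀ := by rw [hX1]
      _ = Y * C := hY4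
  have hXC : X * C = Y * C := f1.symm.trans f2
  calc X = X * C * X := hX2.symm
    _ = X * (C * X) := Matrix.mul_assoc X C X
    _ = X * (C * Y) := by rw [hCX]
    _ = (X * C) * Y := (Matrix.mul_assoc X C Y).symm
    _ = (Y * C) * Y := by rw [hXC]
    _ = Y := hY2

private lemma invOf_transpose_gram {r d : ℕ} (B : Matrix (Fin r) (Fin d) ℝ)
    [Invertible (Bᵀ * B)] : (⅟(Bᵀ * B))ᵀ = ⅟(Bᵀ * B) := by
  have hsym : (Bᵀ * B)ᵀ = Bᵀ * B := by rw [transpose_mul, transpose_transpose]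
  have h1 : (⅟(Bᵀ * B) * (Bᵀ * B))ᵀ = 1 := by rw [invOf_mul_self, transpose_one]
  rw [transpose_mul, hsym] at h1
  exact (invOf_eq_right_inv h1).symm

private lemma mp_construct {r d : ℕ} (B : Matrix (Fin r) (Fin d) ℝ)
    (W : Matrix (Fin d) (Fin d) ℝ) [Invertible W] [Invertible (Bᵀ * B)] :
    IsMoorePenrose (B * W) (⅟W * (⅟(Bᵀ * B) * Bᵀ)) := by
  have hT := invOf_transpose_gram B
  have hQBW : (⅟W * (⅟(Bᵀ * B) * Bᵀ)) * (B * W) = 1 := by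
    calc (⅟W * (⅟(Bᵀ * B) * Bᵀ)) * (B * W)
        = ⅟W * (⅟(Bᵀ * B) * (Bᵀ * (B * W))) := by simp only [Matrix.mul_assoc]
      _ = ⅟W * (⅟(Bᵀ * B) * (Bᵀ * B * W)) := by rw [Matrix.mul_assoc Bᵀ B W]
      _ = ⅟W * W := by rw [Matrix.invOf_mul_cancel_left]
      _ = 1 := invOf_mul_self W
  have hBWQ : (B * W) * (⅟W * (⅟(Bᵀ * B) * Bᵀ)) = B * (⅟(Bᵀ * B) * Bᵀ) := by
    calc (B * W) * (⅟W * (⅟(Bᵀ * B) * Bᵀ))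
        = B * (W * (⅟W * (⅟(Bᵀ * B) * Bᵀ))) := Matrix.mul_assoc _ _ _
      _ = B * (⅟(Bᵀ * B) * Bᵀ) := by rw [Matrix.mul_invOf_cancel_left]
  have hsymm : (B * (⅟(Bᵀ * B) * Bᵀ))ᵀ = B * (⅟(Bᵀ * B) * Bᵀ) := by
    rw [transpose_mul B (⅟(Bᵀ * B) * Bᵀ), transpose_mul (⅟(Bᵀ * B)) Bᵀ,
      transpose_transpose, hT, Matrix.mul_assoc]
  refine ⟨?_, ?_, ?_, ?_⟩
  · rw [hBWQ]
    calc B * (⅟(Bᵀ * B) * Bᵀ) * (B * W)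
        = B * (⅟(Bᵀ * B) * (Bᵀ * (B * W))) := by simp only [Matrix.mul_assoc]
      _ = B * (⅟(Bᵀ * B) * (Bᵀ * B * W)) := by rw [Matrix.mul_assoc Bᵀ B W]
      _ = B * W := by rw [Matrix.invOf_mul_cancel_left]
  · rw [hQBW, Matrix.one_mul]
  · rw [hBWQ]; exact hsymm
  · rw [hQBW]; exact transpose_one

private lemma dot_mulVec_bound {d : ℕ} (N : Matrix (Fin d) (Fin d) ℝ)
    (x y : EuclideanSpace ℝ (Fin d)) :
    |x ⬝ᵥ (N *ᵥ y)| ≤ ‖N‖ * ‖x‖ * ‖y‖ := by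
  have h1 : x ⬝ᵥ (N *ᵥ y) = inner ℝ x ((EuclideanSpace.equiv (Fin d) ℝ).symm (N *ᵥ y)) := by
    rw [PiLp.inner_apply]
    simp [dotProduct, mul_comm]
  rw [h1]
  calc |(inner ℝ x ((EuclideanSpace.equiv (Fin d) ℝ).symm (N *ᵥ y)) : ℝ)|
      ≤ ‖x‖ * ‖(EuclideanSpace.equiv (Fin d) ℝ).symm (N *ᵥ y)‖ := abs_real_inner_le_norm _ _
    _ ≤ ‖x‖ * (‖N‖ * ‖y‖) :=
        mul_le_mul_of_nonneg_left (Matrix.l2_opNorm_mulVec N y) (norm_nonneg _)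
    _ = ‖N‖ * ‖x‖ * ‖y‖ := by ring

theorem sketched_inner_products_additive_error {n d r : ℕ}
    (A U : Matrix (Fin n) (Fin d) ℝ) (S V : Matrix (Fin d) (Fin d) ℝ)
    (Pi : Matrix (Fin r) (Fin n) ℝ) (Ap : Matrix (Fin d) (Fin r) ℝ)
    (ε : ℝ) (hε0 : 0 < ε) (hε1 : ε ≤ 1 / 2)
    (hrank : A.rank = d)
    (hSVD : A = U * S * Vᵀ) (hU : Uᵀ * U = 1)
    (hV : Vᵀ * V = 1) (hV' : V * Vᵀ = 1) (hS : Invertible S)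
    (h : ‖(1 : Matrix (Fin d) (Fin d) ℝ) - Uᵀ * Piᵀ * Pi * U‖ ≤ ε)
    (hrankPiU : (Pi * U).rank = d)
    (hAp : IsMoorePenrose (Pi * A) Ap) :
    ∀ i j : Fin n,
      |(∑ k, U i k * U j k) - ∑ k, (A * Ap) i k * (A * Ap) j k| ≤
        (ε / (1 - ε)) * Real.sqrt (∑ k, (U i k) ^ 2) * Real.sqrt (∑ k, (U j k) ^ 2) := by
  have hε2 : ε < 1 := lt_of_le_of_lt hε1 (by norm_num)
  have hε3 : (0 : ℝ) < 1 - ε := by linarith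
  set B : Matrix (Fin r) (Fin d) ℝ := Pi * U with hB
  set M : Matrix (Fin d) (Fin d) ℝ := Bᵀ * B with hMdef
  have hMeq : M = Uᵀ * Piᵀ * Pi * U := by
    rw [hMdef, hB, transpose_mul]
    simp only [Matrix.mul_assoc]
  have hnorm : ‖(1 : Matrix (Fin d) (Fin d) ℝ) - M‖ ≤ ε := by rw [hMeq]; exact h
  haveI hMinv : Invertible M := by
    have hu : IsUnit M := by
      have := (Units.oneSub ((1 : Matrix (Fin d) (Fin d) ℝ) - M)
        (lt_of_le_of_lt hnorm hε2)).isUnit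
      rwa [Units.val_oneSub, sub_sub_cancel] at this
    exact hu.invertible
  haveI hVT : Invertible Vᵀ := ⟨V, hV', hV⟩
  haveI hW : Invertible (S * Vᵀ) := invertibleMul S Vᵀ
  have hT : (⅟M)ᵀ = ⅟M := invOf_transpose_gram B
  have hA' : A = U * (S * Vᵀ) := by rw [hSVD, Matrix.mul_assoc]
  have hPiA : Pi * A = B * (S * Vᵀ) := by
    rw [hA', hB]; simp only [Matrix.mul_assoc]
  have hApQ : Ap = ⅟(S * Vᵀ) * (⅟M * Bᵀ) := by
    refine mp_unique (C := B * (S * Vᵀ)) ?_ (mp_construct B (S * Vᵀ))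
    rw [← hPiA]; exact hAp
  have hAAp : A * Ap = U * (⅟M * Bᵀ) := by
    rw [hApQ, hA', Matrix.mul_assoc, Matrix.mul_invOf_cancel_left]
  have hGram : (A * Ap) * (A * Ap)ᵀ = U * (⅟M * Uᵀ) := by
    rw [hAAp]
    have ht : (U * (⅟M * Bᵀ))ᵀ = B * (⅟M * Uᵀ) := by
      rw [transpose_mul U (⅟M * Bᵀ), transpose_mul (⅟M) Bᵀ, transpose_transpose, hT,
        Matrix.mul_assoc]
    rw [ht]
    calc U * (⅟M * Bᵀ) * (B * (⅟M * Uᵀ))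
        = U * (⅟M * (Bᵀ * (B * (⅟M * Uᵀ)))) := by simp only [Matrix.mul_assoc]
      _ = U * (⅟M * (Bᵀ * B * (⅟M * Uᵀ))) := by rw [Matrix.mul_assoc Bᵀ B]
      _ = U * (⅟M * Uᵀ) := by rw [← hMdef, Matrix.invOf_mul_cancel_left]
  have hone : ‖(1 : Matrix (Fin d) (Fin d) ℝ)‖ ≤ 1 := by
    rw [Matrix.cstar_norm_def, _root_.map_one]
    exact ContinuousLinearMap.norm_id_le
  have hinv_norm : ‖⅟M‖ ≤ 1 / (1 - ε) := by
    have key : ⅟M = 1 + (1 - M) * ⅟M := by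
      rw [Matrix.sub_mul, Matrix.one_mul, mul_invOf_self]; abel
    have h2 : ‖⅟M‖ ≤ 1 + ε * ‖⅟M‖ := by
      calc ‖⅟M‖ = ‖(1 : Matrix (Fin d) (Fin d) ℝ) + (1 - M) * ⅟M‖ := by rw [← key]
        _ ≤ ‖(1 : Matrix (Fin d) (Fin d) ℝ)‖ + ‖(1 - M) * ⅟M‖ := norm_add_le _ _
        _ ≤ 1 + ‖(1 : Matrix (Fin d) (Fin d) ℝ) - M‖ * ‖⅟M‖ :=
            add_le_add hone (Matrix.l2_opNorm_mul _ _)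
        _ ≤ 1 + ε * ‖⅟M‖ :=
            add_le_add_right (mul_le_mul_of_nonneg_right hnorm (norm_nonneg _)) 1
    rw [le_div_iff₀ hε3]
    nlinarith [norm_nonneg (⅟M)]
  have hN : ‖(1 : Matrix (Fin d) (Fin d) ℝ) - ⅟M‖ ≤ ε / (1 - ε) := by
    have key : (1 : Matrix (Fin d) (Fin d) ℝ) - ⅟M = (M - 1) * ⅟M := by
      rw [Matrix.sub_mul, Matrix.one_mul, mul_invOf_self]
    calc ‖(1 : Matrix (Fin d) (Fin d) ℝ) - ⅟M‖ = ‖(M - 1) * ⅟M‖ := by rw [key]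
      _ ≤ ‖M - 1‖ * ‖⅟M‖ := Matrix.l2_opNorm_mul _ _
      _ = ‖(1 : Matrix (Fin d) (Fin d) ℝ) - M‖ * ‖⅟M‖ := by rw [← norm_neg, neg_sub]
      _ ≤ ε * (1 / (1 - ε)) :=
          mul_le_mul hnorm hinv_norm (norm_nonneg _) (le_of_lt hε0)
      _ = ε / (1 - ε) := by field_simp
  intro i j
  set x : EuclideanSpace ℝ (Fin d) := WithLp.toLp 2 (fun k => U i k) with hx
  set y : EuclideanSpace ℝ (Fin d) := WithLp.toLp 2 (fun k => U j k) with hy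
  have hxnorm : ‖x‖ = Real.sqrt (∑ k, (U i k) ^ 2) := by
    rw [EuclideanSpace.norm_eq]
    simp [hx, Real.norm_eq_abs, sq_abs]
  have hynorm : ‖y‖ = Real.sqrt (∑ k, (U j k) ^ 2) := by
    rw [EuclideanSpace.norm_eq]
    simp [hy, Real.norm_eq_abs, sq_abs]
  have e1 : (∑ k, U i k * U j k) = (U * Uᵀ) i j := by
    rw [Matrix.mul_apply]
    simp only [Matrix.transpose_apply]
  have e2 : (∑ k, (A * Ap) i k * (A * Ap) j k) = ((A * Ap) * (A * Ap)ᵀ) i j := by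
    rw [Matrix.mul_apply]
    simp only [Matrix.transpose_apply]
  have e3 : U * Uᵀ - U * (⅟M * Uᵀ) = U * (((1 : Matrix (Fin d) (Fin d) ℝ) - ⅟M) * Uᵀ) := by
    rw [Matrix.sub_mul, Matrix.mul_sub, Matrix.one_mul]
  have hkey : (∑ k, U i k * U j k) - (∑ k, (A * Ap) i k * (A * Ap) j k)
      = x ⬝ᵥ (((1 : Matrix (Fin d) (Fin d) ℝ) - ⅟M) *ᵥ y) := by
    rw [e1, e2, hGram, ← Matrix.sub_apply, e3]
    simp only [Matrix.mul_apply, Matrix.mulVec, dotProduct, Matrix.transpose_apply, hx, hy]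
  rw [hkey, ← hxnorm, ← hynorm]
  calc |x ⬝ᵥ (((1 : Matrix (Fin d) (Fin d) ℝ) - ⅟M) *ᵥ y)|
      ≤ ‖(1 : Matrix (Fin d) (Fin d) ℝ) - ⅟M‖ * ‖x‖ * ‖y‖ := dot_mulVec_bound _ x y
    _ ≤ ε / (1 - ε) * ‖x‖ * ‖y‖ := by
        apply mul_le_mul_of_nonneg_right _ (norm_nonneg y)
        exact mul_le_mul_of_nonneg_right hN (norm_nonneg x)
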